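/- Let $1\le p<\infty$, let $\mathcal B$ be a collection of balls in $\mathbb{R}^n$ whose union is $\mathbb{R}^n$, and let $M_{\mathcal B}f(x)=\sup_{x\in B,\,B\in\mathcal B}|B|^{-1}\int_B|f|$. If $M_{\mathcal B}$ is bounded from $\mathcal M^{p}(\varphi,w)$ to $W\mathcal M^{p}(\varphi,w)$ with operator norm $C$, then for every ball $B\in\mathcal B$, $\|\chi_B\|_{\mathcal M^{p}(\varphi,w)}\|\chi_B\|_{\mathcal M^{p}(\varphi,w)'}\le C|B|$; in particular $w\in A_{\mathcal B}(\mathcal M^{p}(\varphi))$ with $[w]_{A_{\mathcal B}(\mathcal M^{p}(\varphi))}\le C$. -/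
import Mathlib


open MeasureTheory Metric ENNReal NNReal Set

noncomputable section

abbrev En (n : ℕ) := EuclideanSpace ℝ (Fin n)

/-- Weighted Morrey "norm": sup over all balls of `((φ(B))⁻¹ ∫_B f^p w)^{1/p}`. -/
def morreyNorm (n : ℕ) (p : ℝ) (φ : En n → ℝ → ℝ≥0∞) (w f : En n → ℝ≥0∞) : ℝ≥0∞ :=
  ⨆ (c : En n) (r : ℝ) (_ : 0 < r),
    ((∫⁻ x in ball c r, f x ^ p * w x) / φ c r) ^ (1 / p)

/-- Köthe dual norm of the weighted Morrey space. -/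
def kotheNorm (n : ℕ) (p : ℝ) (φ : En n → ℝ → ℝ≥0∞) (w g : En n → ℝ≥0∞) : ℝ≥0∞ :=
  ⨆ (f : En n → ℝ≥0∞) (_ : morreyNorm n p φ w f ≤ 1), ∫⁻ x, f x * g x

/-- Characteristic function of the ball `B(c,r)`, with values in `ℝ≥0∞`. -/
def chiB {n : ℕ} (c : En n) (r : ℝ) : En n → ℝ≥0∞ := (ball c r).indicator 1

/-- Weak weighted Morrey quasinorm. -/
def weakMorreyNorm (n : ℕ) (p : ℝ) (φ : En n → ℝ → ℝ≥0∞) (w f : En n → ℝ≥0∞) : ℝ≥0∞ :=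
  ⨆ (c : En n) (r : ℝ) (_ : 0 < r) (t : ℝ≥0),
    ((t : ℝ≥0∞) ^ p * (∫⁻ x in ball c r ∩ {x | (t : ℝ≥0∞) < f x}, w x) / φ c r) ^ (1 / p)

/-- Maximal operator associated to a family `ℬ` of balls, a ball being encoded by its
center and radius. -/
def maxOpB (n : ℕ) (ℬ : Set (En n × ℝ)) (f : En n → ℝ≥0∞) (x : En n) : ℝ≥0∞ :=
  ⨆ (B : En n × ℝ) (_ : B ∈ ℬ) (_ : x ∈ ball B.1 B.2),
    (∫⁻ y in ball B.1 B.2, f y) / volume (ball B.1 B.2)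

/-- if `M_ℬ` maps `M^p(φ,w)` to `WM^p(φ,w)` with operator norm `C`, then
for every ball `B ∈ ℬ`, `‖χ_B‖_{M^p} ‖χ_B‖_{(M^p)'} ≤ C |B|`; in particular
`w ∈ A_ℬ(M^p(φ))` with constant at most `C`. -/
theorem stmt2 {n : ℕ} (p : ℝ) (hp : 1 ≤ p) (ℬ : Set (En n × ℝ))
    (hpos : ∀ B ∈ ℬ, 0 < B.2)
    (hcover : (⋃ B ∈ ℬ, ball B.1 B.2) = Set.univ)
    (φ : En n → ℝ → ℝ≥0∞) (w : En n → ℝ≥0∞) (C : ℝ≥0∞)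
    (hbdd : ∀ f : En n → ℝ≥0∞,
      weakMorreyNorm n p φ w (maxOpB n ℬ f) ≤ C * morreyNorm n p φ w f) :
    ∀ B ∈ ℬ, morreyNorm n p φ w (chiB B.1 B.2) * kotheNorm n p φ w (chiB B.1 B.2)
      ≤ C * volume (ball B.1 B.2) := by
  rintro ⟨c, r⟩ hB
  dsimp only
  have hr : 0 < r := hpos _ hB
  have hppos : (0 : ℝ) < p := lt_of_lt_of_le one_pos hp
  have hp0 : p ≠ 0 := ne_of_gt hppos
  set N := morreyNorm n p φ w (chiB c r) with hN
  set V := volume (ball c r) with hV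
  have hV0 : V ≠ 0 := (measure_ball_pos volume c hr).ne'
  have hVt : V ≠ ∞ := measure_ball_lt_top.ne
  have key : ∀ f : En n → ℝ≥0∞, morreyNorm n p φ w f ≤ 1 →
      N * ∫⁻ x, f x * chiB c r x ≤ C * V := by
    intro f hf
    have hint : (∫⁻ x, f x * chiB c r x) = ∫⁻ x in ball c r, f x := by
      have h1 : ∀ x, f x * chiB c r x = (ball c r).indicator f x := by
        intro x
        by_cases hx : x ∈ ball c r
        · simp [chiB, Set.indicator_of_mem hx]
        · simp [chiB, Set.indicator_of_notMem hx]
      rw [lintegral_congr h1, lintegral_indicator measurableSet_ball f]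
    set I := ∫⁻ x in ball c r, f x with hI
    set a := I / V with ha
    have claim : ∀ t : ℝ≥0, (t : ℝ≥0∞) < a → (t : ℝ≥0∞) * N ≤ C := by
      intro t ht
      have hsub : ball c r ⊆ {x | (t : ℝ≥0∞) < maxOpB n ℬ f x} := by
        intro x hx
        have hle : a ≤ maxOpB n ℬ f x := by
          rw [maxOpB]
          exact le_iSup_of_le (c, r) (le_iSup_of_le hB (le_iSup_of_le hx le_rfl))
        exact lt_of_lt_of_le ht hle
      have hwm : (t : ℝ≥0∞) * N ≤ weakMorreyNorm n p φ w (maxOpB n ℬ f) := by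
        rw [hN, morreyNorm, ENNReal.mul_iSup]
        refine iSup_le fun c' => ?_
        rw [ENNReal.mul_iSup]
        refine iSup_le fun r' => ?_
        rw [ENNReal.mul_iSup]
        refine iSup_le fun hr' => ?_
        have h2 : ∀ x, chiB c r x ^ p * w x = (ball c r).indicator w x := by
          intro x
          by_cases hx : x ∈ ball c r
          · simp [chiB, Set.indicator_of_mem hx]
          · simp [chiB, Set.indicator_of_notMem hx, ENNReal.zero_rpow_of_pos hppos]
        have hle : (∫⁻ x in ball c' r', chiB c r x ^ p * w x)
            ≤ ∫⁻ x in ball c' r' ∩ {x | (t : ℝ≥0∞) < maxOpB n ℬ f x}, w x := by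
          calc (∫⁻ x in ball c' r', chiB c r x ^ p * w x)
              = ∫⁻ x in ball c' r', (ball c r).indicator w x :=
                lintegral_congr fun x => h2 x
            _ = ∫⁻ x in ball c r ∩ ball c' r', w x := by
                rw [lintegral_indicator measurableSet_ball w,
                  Measure.restrict_restrict measurableSet_ball]
            _ ≤ _ := lintegral_mono_set (fun x hx => Set.mem_inter hx.2 (hsub hx.1))
        calc (t : ℝ≥0∞) * ((∫⁻ x in ball c' r', chiB c r x ^ p * w x) / φ c' r') ^ (1 / p)
            = ((t : ℝ≥0∞) ^ p * ((∫⁻ x in ball c' r', chiB c r x ^ p * w x) / φ c' r')) ^ (1 / p) := by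
              rw [ENNReal.mul_rpow_of_nonneg _ _ (by positivity : (0:ℝ) ≤ 1 / p),
                ← ENNReal.rpow_mul, mul_one_div_cancel hp0, ENNReal.rpow_one]
          _ ≤ ((t : ℝ≥0∞) ^ p *
                (∫⁻ x in ball c' r' ∩ {x | (t : ℝ≥0∞) < maxOpB n ℬ f x}, w x) / φ c' r') ^ (1 / p) := by
              rw [mul_div_assoc]
              exact ENNReal.rpow_le_rpow
                (mul_le_mul_right (ENNReal.div_le_div_right hle _) _) (by positivity)
          _ ≤ weakMorreyNorm n p φ w (maxOpB n ℬ f) := by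
              rw [weakMorreyNorm]
              exact le_iSup_of_le c' (le_iSup_of_le r'
                (le_iSup_of_le hr' (le_iSup_of_le t le_rfl)))
      calc (t : ℝ≥0∞) * N ≤ weakMorreyNorm n p φ w (maxOpB n ℬ f) := hwm
        _ ≤ C * morreyNorm n p φ w f := hbdd f
        _ ≤ C * 1 := mul_le_mul_right hf C
        _ = C := mul_one C
    have haN : a * N ≤ C := by
      rcases eq_or_ne N 0 with h | hN0
      · simp [h]
      rcases eq_or_ne N ∞ with h | hNt
      · rcases eq_or_ne a 0 with h0 | ha0
        · simp [h0]
        obtain ⟨t, ht0, hta⟩ := ENNReal.lt_iff_exists_nnreal_btwn.mp (pos_iff_ne_zero.mpr ha0)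
        have hc := claim t hta
        rw [h, ENNReal.mul_top (by exact_mod_cast ht0.ne' : (t : ℝ≥0∞) ≠ 0)] at hc
        exact le_top.trans hc
      have h1 : ∀ t : ℝ≥0, (t : ℝ≥0∞) < a → (t : ℝ≥0∞) ≤ C / N := fun t ht =>
        (ENNReal.le_div_iff_mul_le (Or.inl hN0) (Or.inl hNt)).mpr (claim t ht)
      have h2 : a ≤ C / N := ENNReal.le_of_forall_nnreal_lt h1
      exact (ENNReal.le_div_iff_mul_le (Or.inl hN0) (Or.inl hNt)).mp h2
    have hfin : N * I ≤ C * V := by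
      have h3 := mul_le_mul_left haN V
      rwa [ha, mul_comm (I / V) N, mul_assoc, ENNReal.div_mul_cancel hV0 hVt] at h3
    rw [hint]
    exact hfin
  rw [kotheNorm, ENNReal.mul_iSup]
  refine iSup_le fun f => ?_
  rw [ENNReal.mul_iSup]
  exact iSup_le fun hf => key f hf
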